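/- For the Laplacian matrix L of an unweighted undirected graph on n vertices, every nonzero eigenvalue of L is at least 1/(8n²). -/

import Mathlib

open Matrix Finset

private lemma list_sq_nonneg' {α : Type*} (l : List α) (g : α → ℝ) :
    0 ≤ (l.map (fun d => (g d)^2)).sum := by
  apply List.sum_nonneg
  intro y hy
  obtain ⟨d, _, rfl⟩ := List.mem_map.mp hy
  positivity

/-- Telescoping Cauchy–Schwarz along a walk. -/
private lemma walk_sq_le' {V : Type*} {G : SimpleGraph V} (x : V → ℝ) :
    ∀ {a b : V} (p : G.Walk a b),
      (x a - x b)^2 ≤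
        (p.length : ℝ) *
          (p.darts.map (fun d => (x d.toProd.1 - x d.toProd.2)^2)).sum := by
  intro a b p
  induction p with
  | nil => simp
  | @cons u v w hadj q ih =>
    simp only [SimpleGraph.Walk.darts_cons, SimpleGraph.Walk.length_cons, List.map_cons,
      List.sum_cons, Nat.cast_add, Nat.cast_one]
    have hSnn : 0 ≤ (q.darts.map (fun d => (x d.toProd.1 - x d.toProd.2)^2)).sum :=
      list_sq_nonneg' _ _
    have hl : (0:ℝ) ≤ (q.length : ℝ) := Nat.cast_nonneg _
    set s : ℝ := x u - x v with hs
    set t : ℝ := x v - x w with ht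
    set S : ℝ := (q.darts.map (fun d => (x d.toProd.1 - x d.toProd.2)^2)).sum with hS
    have hxuw : x u - x w = s + t := by ring
    rw [hxuw]
    have ihq : t^2 ≤ (q.length : ℝ) * S := ih
    by_cases h0 : q.length = 0
    · have ht2 : t^2 = 0 := by
        rw [h0] at ihq; push_cast at ihq; linarith [sq_nonneg t]
      have ht0 : t = 0 := by
        have := sq_nonneg t
        nlinarith [pow_eq_zero_iff (n := 2) (two_ne_zero) |>.mp ht2]
      rw [h0, ht0]
      push_cast
      nlinarith [hSnn]
    · have h1 : (1:ℝ) ≤ (q.length : ℝ) := by exact_mod_cast Nat.one_le_iff_ne_zero.mpr h0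
      nlinarith [sq_nonneg ((q.length : ℝ) * s - t), mul_le_mul_of_nonneg_left ihq hl,
        mul_nonneg hl hSnn, hSnn]

private lemma sum_darts_eq' {V : Type*} [Fintype V] [DecidableEq V] (G : SimpleGraph V)
    [DecidableRel G.Adj] (f : V → V → ℝ) :
    ∑ d : G.Dart, f d.toProd.1 d.toProd.2 =
      ∑ i : V, ∑ j : V, if G.Adj i j then f i j else 0 := by
  rw [← Finset.sum_product']
  rw [← Finset.sum_filter]
  refine Finset.sum_bij' (fun d _ => d.toProd)
    (fun p hp => ⟨p, by simpa using (Finset.mem_filter.mp hp).2⟩) ?_ ?_ ?_ ?_ ?_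
  · intro d _
    simp [d.adj]
  · intro p hp
    exact Finset.mem_univ _
  · intro d _
    rfl
  · intro p hp
    rfl
  · intro d _
    rfl

set_option maxHeartbeats 1000000 in
private lemma key_lemma' {V : Type*} [Fintype V] [DecidableEq V] (G : SimpleGraph V)
    [DecidableRel G.Adj] (μ : ℝ) (x : V → ℝ) (u : V)
    (hpos : 0 < x u) (hmax : ∀ v, |x v| ≤ x u)
    (heig : (G.lapMatrix ℝ).mulVec x = μ • x) (hμ : μ ≠ 0) :
    1 / (8 * (Fintype.card V : ℝ) ^ 2) ≤ μ := by
  classical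
  set n : ℝ := (Fintype.card V : ℝ) with hn
  have hn1 : (1:ℝ) ≤ n := by
    have h : 1 ≤ Fintype.card V := Fintype.card_pos_iff.mpr ⟨u⟩
    rw [hn]
    exact_mod_cast h
  set Q : ℝ := x ⬝ᵥ ((G.lapMatrix ℝ) *ᵥ x) with hQdef
  set N : ℝ := x ⬝ᵥ x with hNdef
  have hQ : Q = μ * N := by
    rw [hQdef, heig, dotProduct_smul, smul_eq_mul]
  -- the sum of x over the connected component of u is zero
  set c : V → ℝ := fun v => if G.Reachable u v then 1 else 0 with hc
  have hLc : (G.lapMatrix ℝ) *ᵥ c = 0 := by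
    have := (SimpleGraph.lapMatrix_mulVec_eq_zero_iff_forall_reachable (G := G) (x := c)).mpr ?_
    · exact this
    · intro i j hij
      simp only [hc]
      by_cases h : G.Reachable u i
      · rw [if_pos h, if_pos (h.trans hij)]
      · rw [if_neg h, if_neg (fun h' => h (h'.trans hij.symm))]
  have hcx : c ⬝ᵥ x = 0 := by
    have h1 : c ⬝ᵥ ((G.lapMatrix ℝ) *ᵥ x) = ((G.lapMatrix ℝ) *ᵥ c) ⬝ᵥ x := by
      rw [dotProduct_mulVec, ← mulVec_transpose, (SimpleGraph.isSymm_lapMatrix (G := G) (R := ℝ)).eq]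
    rw [hLc, zero_dotProduct, heig, dotProduct_smul, smul_eq_mul] at h1
    exact (mul_eq_zero.mp h1).resolve_left hμ
  have hsum : ∑ v ∈ Finset.univ.filter (fun v => G.Reachable u v), x v = 0 := by
    rw [Finset.sum_filter]
    simpa [hc, dotProduct, ite_mul, one_mul, zero_mul] using hcx
  -- find a vertex w in the component of u with x w ≤ 0
  have hw : ∃ w, G.Reachable u w ∧ x w ≤ 0 := by
    by_contra h
    push_neg at h
    have hpos' : 0 < ∑ v ∈ Finset.univ.filter (fun v => G.Reachable u v), x v := by
      apply Finset.sum_pos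
      · intro v hv
        exact h v (Finset.mem_filter.mp hv).2
      · exact ⟨u, Finset.mem_filter.mpr ⟨Finset.mem_univ _, SimpleGraph.Reachable.refl u⟩⟩
    rw [hsum] at hpos'
    exact lt_irrefl 0 hpos'
  obtain ⟨w, hreach, hwle⟩ := hw
  obtain ⟨p0⟩ := hreach
  set p : G.Walk u w := p0.toPath.1 with hp
  have hpath : p.IsPath := p0.toPath.2
  have hlen : (p.length : ℝ) ≤ n := by
    have h := hpath.length_lt
    rw [hn]
    exact_mod_cast h.le
  -- the quadratic form
  set D : ℝ := ∑ i : V, ∑ j : V, if G.Adj i j then (x i - x j)^2 else 0 with hD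
  have hQD : D = 2 * Q := by
    have h1 : Matrix.toLinearMap₂' ℝ (G.lapMatrix ℝ) x x = Q :=
      Matrix.toLinearMap₂'_apply' _ _ _
    rw [SimpleGraph.lapMatrix_toLinearMap₂'] at h1
    rw [hD]
    linarith [h1]
  -- bound the dart sum of the path by D
  set S : ℝ := (p.darts.map (fun d => (x d.toProd.1 - x d.toProd.2)^2)).sum with hS
  have hSD : S ≤ D := by
    have hnd : p.darts.Nodup := by
      have := hpath.edges_nodup
      rw [SimpleGraph.Walk.edges] at this
      exact this.of_map _
    have h1 : S = ∑ d ∈ p.darts.toFinset, (x d.toProd.1 - x d.toProd.2)^2 :=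
      (List.sum_toFinset _ hnd).symm
    have h2 : ∑ d ∈ p.darts.toFinset, (x d.toProd.1 - x d.toProd.2)^2 ≤
        ∑ d : G.Dart, (x d.toProd.1 - x d.toProd.2)^2 := by
      apply Finset.sum_le_sum_of_subset_of_nonneg (Finset.subset_univ _)
      intro d _ _
      positivity
    rw [h1, hD, ← sum_darts_eq' G (fun i j => (x i - x j)^2)]
    exact h2
  -- key chain of inequalities
  have hkey : (x u)^2 ≤ (p.length : ℝ) * D := by
    have h1 : (x u)^2 ≤ (x u - x w)^2 := by
      have : x u ≤ x u - x w := by linarith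
      exact pow_le_pow_left₀ hpos.le this 2
    have h2 := walk_sq_le' (G := G) x p
    have h3 : (p.length : ℝ) * S ≤ (p.length : ℝ) * D :=
      mul_le_mul_of_nonneg_left hSD (Nat.cast_nonneg _)
    calc (x u)^2 ≤ (x u - x w)^2 := h1
      _ ≤ (p.length : ℝ) * S := h2
      _ ≤ (p.length : ℝ) * D := h3
  have hxu2 : 0 < (x u)^2 := by positivity
  have hNle : N ≤ n * (x u)^2 := by
    have : ∀ v ∈ Finset.univ, x v * x v ≤ (x u)^2 := by
      intro v _
      have h1 : (x v)^2 ≤ (x u)^2 := by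
        have := hmax v
        nlinarith [abs_nonneg (x v), sq_abs (x v)]
      nlinarith [sq_abs (x v)]
    have := Finset.sum_le_card_nsmul Finset.univ (fun v => x v * x v) ((x u)^2) this
    simpa [hNdef, dotProduct, nsmul_eq_mul, hn, mul_comm] using this
  have hNpos : 0 < N := by
    have h1 : (x u)^2 ≤ N := by
      have := Finset.single_le_sum (f := fun v => x v * x v)
        (fun v _ => mul_self_nonneg (x v)) (Finset.mem_univ u)
      simpa [hNdef, dotProduct, sq] using this
    linarith
  -- conclude
  have hD2 : D = 2 * μ * N := by rw [hQD, hQ]; ring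
  have hμpos : 0 < μ := by
    by_contra h
    push_neg at h
    have : (p.length : ℝ) * D ≤ 0 := by
      rw [hD2]
      have : 2 * μ * N ≤ 0 := by nlinarith
      nlinarith [Nat.cast_nonneg (α := ℝ) p.length]
    linarith
  have hfinal : 1 ≤ 2 * n^2 * μ := by
    have h1 : (x u)^2 ≤ (p.length : ℝ) * (2 * μ * N) := by rw [← hD2]; exact hkey
    have h2 : (p.length : ℝ) * (2 * μ * N) ≤ n * (2 * μ * N) := by
      apply mul_le_mul_of_nonneg_right hlen
      positivity
    have h3 : n * (2 * μ * N) ≤ n * (2 * μ * (n * (x u)^2)) := by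
      apply mul_le_mul_of_nonneg_left _ (by linarith)
      apply mul_le_mul_of_nonneg_left hNle (by positivity)
    have h4 : (x u)^2 ≤ 2 * n^2 * μ * (x u)^2 := by nlinarith
    nlinarith
  rw [div_le_iff₀ (by positivity)]
  nlinarith

/-- Every nonzero eigenvalue of the Laplacian of a simple unweighted undirected
graph on `n` vertices is at least `1/(8n²)`. -/
theorem stmt_6 {V : Type*} [Fintype V] [DecidableEq V] (G : SimpleGraph V)
    [DecidableRel G.Adj] (μ : ℝ) (x : V → ℝ) (hx : x ≠ 0)
    (heig : (G.lapMatrix ℝ).mulVec x = μ • x) (hμ : μ ≠ 0) :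
    1 / (8 * (Fintype.card V : ℝ) ^ 2) ≤ μ := by
  classical
  have hne : ∃ v, x v ≠ 0 := by
    by_contra h
    push_neg at h
    exact hx (funext h)
  obtain ⟨v0, hv0⟩ := hne
  obtain ⟨u, _, hu⟩ := Finset.exists_max_image Finset.univ (fun v => |x v|) ⟨v0, Finset.mem_univ _⟩
  have hmax : ∀ v, |x v| ≤ |x u| := fun v => hu v (Finset.mem_univ v)
  have hupos : 0 < |x u| := lt_of_lt_of_le (abs_pos.mpr hv0) (hmax v0)
  rcases lt_or_gt_of_ne (fun h : x u = 0 => by simp [h] at hupos) with hneg | hposu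
  · -- use -x
    have heig' : (G.lapMatrix ℝ).mulVec (-x) = μ • (-x) := by
      rw [mulVec_neg, heig, smul_neg]
    apply key_lemma' G μ (-x) u _ _ heig' hμ
    · simpa using hneg
    · intro v
      simp only [Pi.neg_apply, abs_neg]
      calc |x v| ≤ |x u| := hmax v
        _ = -x u := abs_of_neg hneg
  · apply key_lemma' G μ x u hposu _ heig hμ
    intro v
    calc |x v| ≤ |x u| := hmax v
      _ = x u := abs_of_pos hposu
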